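/- For every positive integer n, there exist a unique leader m and a unique integer k ≥ 0 such that n = 3^k·m and δ(n) = δ(m); for this m and k one moreover has ‖n‖ = ‖m‖ + 3k. In particular, for every real r ≥ 0, each n with δ(n) < r arises this way from a unique leader m with δ(m) < r. -/

import Mathlib

/-- `CanWrite n k` means the positive integer `n` can be written using exactly `k` ones
combined by addition and multiplication. -/
inductive CanWrite : ℕ → ℕ → Prop
  | one : CanWrite 1 1
  | add {a b j k : ℕ} : CanWrite a j → CanWrite b k → CanWrite (a + b) (j + k)
  | mul {a b j k : ℕ} : CanWrite a j → CanWrite b k → CanWrite (a * b) (j + k)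

/-- The integer complexity `‖n‖`: the least number of ones needed to write `n`. -/
noncomputable def cpx (n : ℕ) : ℕ := sInf {k | CanWrite n k}

/-- The defect `δ(n) = ‖n‖ - 3 log₃ n`. -/
noncomputable def defect (n : ℕ) : ℝ := (cpx n : ℝ) - 3 * Real.logb 3 n

/-- `n` is stable if `‖3^k n‖ = 3k + ‖n‖` for all `k ≥ 0`. -/
def Stable (n : ℕ) : Prop := ∀ k : ℕ, cpx (3 ^ k * n) = 3 * k + cpx n

/-- The stabilization length `K(n)`: the least `k` such that `3^k n` is stable. -/
noncomputable def stabLen (n : ℕ) : ℕ := sInf {k | Stable (3 ^ k * n)}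

/-- The stable complexity `‖n‖_st`: equal to `‖3^k n‖ - 3k` for any `k` with `3^k n` stable. -/
noncomputable def stableCpx (n : ℕ) : ℕ :=
  sInf {m | ∃ k : ℕ, Stable (3 ^ k * n) ∧ cpx (3 ^ k * n) = m + 3 * k}

/-- The stable defect `δ_st(n) = ‖n‖_st - 3 log₃ n`. -/
noncomputable def stableDefect (n : ℕ) : ℝ := (stableCpx n : ℝ) - 3 * Real.logb 3 n

/-- A positive integer is a leader if it is the smallest positive integer with its defect. -/
def Leader (n : ℕ) : Prop := 0 < n ∧ ∀ m : ℕ, 0 < m → defect m = defect n → n ≤ m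

/-- If `n = 3^k * m` and the defects agree, then the complexities differ by `3k`. -/
lemma cpx_of_defect_eq (m k n : ℕ) (hm : 0 < m) (hnm : n = 3 ^ k * m)
    (hd : defect n = defect m) : cpx n = cpx m + 3 * k := by
  have hlog : Real.logb 3 (n : ℝ) = k + Real.logb 3 m := by
    rw [hnm]
    push_cast
    rw [Real.logb_mul (by positivity) (by positivity), Real.logb_pow,
      Real.logb_self_eq_one (by norm_num)]
    ring
  unfold defect at hd
  rw [hlog] at hd
  have h : (cpx n : ℝ) = ((cpx m + 3 * k : ℕ) : ℝ) := by push_cast; linarith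
  exact_mod_cast h

/-- Two positive integers with the same defect differ by a factor of a power of 3. -/
lemma pow_three_of_defect_eq (a b : ℕ) (ha : 0 < a) (hb : 0 < b) (hle : b ≤ a)
    (hd : defect a = defect b) : ∃ k : ℕ, a = 3 ^ k * b := by
  haveI : Fact (Nat.Prime 3) := ⟨by norm_num⟩
  unfold defect at hd
  have hlogle : Real.logb 3 (b : ℝ) ≤ Real.logb 3 (a : ℝ) := by
    exact Real.logb_le_logb_of_le (by norm_num) (by positivity) (by exact_mod_cast hle)
  have hcle : cpx b ≤ cpx a := by
    have h : (cpx b : ℝ) ≤ (cpx a : ℝ) := by linarith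
    exact_mod_cast h
  set e := cpx a - cpx b with he_def
  have he : (e : ℝ) = 3 * (Real.logb 3 (a : ℝ) - Real.logb 3 (b : ℝ)) := by
    rw [he_def, Nat.cast_sub hcle]; linarith
  have hlog3 : (0:ℝ) < Real.log 3 := Real.log_pos (by norm_num)
  have key : Real.log ((a : ℝ) ^ 3) = Real.log ((3 : ℝ) ^ e * (b : ℝ) ^ 3) := by
    rw [Real.log_mul (by positivity) (by positivity), Real.log_pow, Real.log_pow, Real.log_pow]
    simp only [Real.logb] at he
    field_simp at he
    push_cast
    linarith
  have hreal : ((a : ℝ)) ^ 3 = (3 : ℝ) ^ e * (b : ℝ) ^ 3 := by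
    have h1 := congrArg Real.exp key
    rwa [Real.exp_log (by positivity), Real.exp_log (by positivity)] at h1
  have hnat : a ^ 3 = 3 ^ e * b ^ 3 := by exact_mod_cast hreal
  have hdvd : 3 ∣ e := by
    have h1 := congrArg (padicValNat 3) hnat
    rw [padicValNat.pow a 3, padicValNat.mul (by positivity) (by positivity),
      padicValNat.prime_pow, padicValNat.pow b 3] at h1
    omega
  obtain ⟨k, hek⟩ := hdvd
  refine ⟨k, ?_⟩
  have hcube : a ^ 3 = (3 ^ k * b) ^ 3 := by
    rw [hnat, hek, mul_pow, ← pow_mul, Nat.mul_comm 3 k]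
  exact Nat.pow_left_injective (by norm_num) hcube

theorem leader_decomposition (n : ℕ) (hn : 0 < n) :
    (∃! p : ℕ × ℕ, Leader p.1 ∧ n = 3 ^ p.2 * p.1 ∧ defect n = defect p.1) ∧
    (∀ m k : ℕ, Leader m → n = 3 ^ k * m → defect n = defect m →
      cpx n = cpx m + 3 * k ∧ ∀ r : ℝ, 0 ≤ r → defect n < r → defect m < r) := by
  constructor
  · -- existence and uniqueness
    set S : Set ℕ := {m | 0 < m ∧ defect m = defect n} with hS
    have hnS : n ∈ S := ⟨hn, rfl⟩
    have hSne : S.Nonempty := ⟨n, hnS⟩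
    set m := sInf S with hm_def
    have hmS : m ∈ S := Nat.sInf_mem hSne
    obtain ⟨hm_pos, hm_defect⟩ := hmS
    have hm_le : m ≤ n := Nat.sInf_le hnS
    have hLeader : Leader m := by
      refine ⟨hm_pos, fun m' hm' hd' => ?_⟩
      exact Nat.sInf_le ⟨hm', by rw [hd', hm_defect]⟩
    obtain ⟨k, hk⟩ := pow_three_of_defect_eq n m hn hm_pos hm_le hm_defect.symm
    refine ⟨(m, k), ⟨hLeader, hk, hm_defect.symm⟩, ?_⟩
    rintro ⟨a', b'⟩ ⟨hL', hk', hd'⟩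
    simp only at hL' hk' hd'
    have hm'm : a' = m := by
      have h1 : a' ≤ m := hL'.2 m hm_pos (by rw [hm_defect, hd'])
      have h2 : m ≤ a' := hLeader.2 a' hL'.1 (by rw [← hd', hm_defect])
      omega
    have hkk : b' = k := by
      have h3 : 3 ^ b' * m = 3 ^ k * m := by rw [hm'm] at hk'; rw [← hk', ← hk]
      have h4 : (3:ℕ) ^ b' = 3 ^ k := Nat.eq_of_mul_eq_mul_right hm_pos h3
      exact Nat.pow_right_injective (by norm_num) h4
    rw [Prod.mk.injEq]
    exact ⟨hm'm, hkk⟩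
  · intro m k hL hnm hd
    exact ⟨cpx_of_defect_eq m k n hL.1 hnm hd, fun r _ hr => by rw [← hd]; exact hr⟩
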